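/- arXiv:1307.6708 — 5 statements merged into one kernel-verified Lean document; each statement's English description precedes it below -/
import Mathlib

section
/- Let G be a finite simple graph on vertex set {1,…,n} with no isolated vertices, and let c₀(G) denote the number of connected components of G that are bipartite. Then the dimension of the edge polytope P(G) equals n − c₀(G) − 1. -/
open Set

/-- The set of generating points `e i + e j` for the edges `{i, j}` of a graph `G`
on the vertex set `Fin n`. -/
def edgeVectors {n : ℕ} (G : SimpleGraph (Fin n)) : Set (Fin n → ℝ) :=
  {x | ∃ i j : Fin n, G.Adj i j ∧ x = Pi.single i 1 + Pi.single j 1}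

/-- The edge polytope of a graph `G` on the vertex set `Fin n`: the convex hull of
the points `e i + e j` over all edges `{i, j}` of `G`. -/
def edgePolytope {n : ℕ} (G : SimpleGraph (Fin n)) : Set (Fin n → ℝ) :=
  convexHull ℝ (edgeVectors G)

/-- The dimension of a polytope: the dimension of its affine hull. -/
noncomputable def polyDim {n : ℕ} (P : Set (Fin n → ℝ)) : ℕ :=
  Module.finrank ℝ (vectorSpan ℝ P)

/-- `c₀ G` is the number of connected components of `G` that are bipartite. -/
noncomputable def numBipartiteComponents {n : ℕ} (G : SimpleGraph (Fin n)) : ℕ :=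
  Nat.card {c : G.ConnectedComponent // (G.induce c.supp).Colorable 2}

section Aux

variable {n : ℕ} (G : SimpleGraph (Fin n))

/-- The subspace of "alternating" functions: f i + f j = 0 on edges. -/
def KK : Submodule ℝ (Fin n → ℝ) where
  carrier := {f | ∀ i j : Fin n, G.Adj i j → f i + f j = 0}
  add_mem' := by
    intro a b ha hb i j hij
    have := ha i j hij; have := hb i j hij
    simp only [Pi.add_apply]; linarith
  zero_mem' := by intro i j _; simp
  smul_mem' := by
    intro c a ha i j hij
    simp only [Pi.smul_apply, smul_eq_mul, ← mul_add, ha i j hij, mul_zero]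

open Classical in
/-- signed indicator -/
noncomputable def csgn (c : G.ConnectedComponent) (v : Fin n) : ℝ :=
  if h : v ∈ c.supp ∧ (G.induce c.supp).Colorable 2 then
    (-1 : ℝ) ^ ((h.2.some ⟨v, h.1⟩ : Fin 2) : ℕ)
  else 0

lemma csgn_pos {c : G.ConnectedComponent} {v : Fin n} (hv : v ∈ c.supp)
    (hb : (G.induce c.supp).Colorable 2) :
    csgn G c v = (-1 : ℝ) ^ ((hb.some ⟨v, hv⟩ : Fin 2) : ℕ) := by
  rw [csgn, dif_pos ⟨hv, hb⟩]

lemma csgn_sq {c : G.ConnectedComponent} {v : Fin n} (hv : v ∈ c.supp)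
    (hb : (G.induce c.supp).Colorable 2) : csgn G c v * csgn G c v = 1 := by
  rw [csgn_pos G hv hb, ← pow_add, ← two_mul, pow_mul]
  norm_num

lemma csgn_ne_zero {c : G.ConnectedComponent} {v : Fin n} (hv : v ∈ c.supp)
    (hb : (G.induce c.supp).Colorable 2) : csgn G c v ≠ 0 := by
  intro h
  have := csgn_sq G hv hb
  rw [h] at this; norm_num at this

lemma mem_supp_of_adj {c : G.ConnectedComponent} {i j : Fin n} (hij : G.Adj i j)
    (hi : i ∈ c.supp) : j ∈ c.supp := by
  rw [SimpleGraph.ConnectedComponent.mem_supp_iff] at hi ⊢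
  rw [← hi]; exact (SimpleGraph.ConnectedComponent.sound hij.symm.reachable)

lemma csgn_adj {c : G.ConnectedComponent} {i j : Fin n} (hij : G.Adj i j)
    (hi : i ∈ c.supp) : csgn G c i + csgn G c j = 0 := by
  have hj : j ∈ c.supp := mem_supp_of_adj G hij hi
  by_cases hb : (G.induce c.supp).Colorable 2
  · rw [csgn_pos G hi hb, csgn_pos G hj hb]
    have hadj : (G.induce c.supp).Adj ⟨i, hi⟩ ⟨j, hj⟩ := hij
    have hne := hb.some.valid hadj
    generalize hA : hb.some ⟨i, hi⟩ = A at *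
    generalize hB : hb.some ⟨j, hj⟩ = B at *
    fin_cases A <;> fin_cases B <;> simp_all
  · rw [csgn, dif_neg (by tauto), csgn, dif_neg (by tauto)]; ring

lemma walk_sgn {f : Fin n → ℝ} (hf : f ∈ KK G) {c : G.ConnectedComponent}
    (hb : (G.induce c.supp).Colorable 2) :
    ∀ {u v : Fin n}, G.Walk u v → u ∈ c.supp →
      f v * csgn G c v = f u * csgn G c u := by
  intro u v p
  induction p with
  | nil => intro _; rfl
  | @cons a b v hadj q ih =>
      intro ha
      have hb' : b ∈ c.supp := mem_supp_of_adj G hadj ha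
      rw [ih hb']
      have h1 : f a + f b = 0 := hf a b hadj
      have h2 : csgn G c a + csgn G c b = 0 := csgn_adj G hadj ha
      have e1 : f b = -f a := by linarith
      have e2 : csgn G c b = -csgn G c a := by linarith
      rw [e1, e2]; ring

lemma walk_pm {f : Fin n → ℝ} (hf : f ∈ KK G) :
    ∀ {u v : Fin n}, G.Walk u v → f v = f u ∨ f v = -f u := by
  intro u v p
  induction p with
  | nil => left; rfl
  | @cons a b v hadj q ih =>
      have h1 : f a + f b = 0 := hf a b hadj
      rcases ih with h | h
      · right; rw [h]; linarith
      · left; rw [h]; linarith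

lemma nonbip_zero {f : Fin n → ℝ} (hf : f ∈ KK G) {c : G.ConnectedComponent}
    (hb : ¬ (G.induce c.supp).Colorable 2) {v : Fin n} (hv : v ∈ c.supp) :
    f v = 0 := by
  by_contra hfv
  apply hb
  refine ⟨SimpleGraph.Coloring.mk (fun w => if f w.1 = f v then 0 else 1) ?_⟩
  rintro ⟨a, ha⟩ ⟨b, hbb⟩ hadj hcol
  have hadj' : G.Adj a b := hadj
  have hab : f a + f b = 0 := hf a b hadj'
  -- a is reachable from v
  have hreach : G.Reachable v a := by
    rw [SimpleGraph.ConnectedComponent.mem_supp_iff] at ha hv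
    exact SimpleGraph.ConnectedComponent.exact (hv.trans ha.symm)
  have hpm : f a = f v ∨ f a = -f v := walk_pm G hf hreach.some
  by_cases hfa : f a = f v
  · have hfb : f b = -f v := by rw [← hfa]; linarith
    have : ¬ (f b = f v) := by rw [hfb]; intro h; apply hfv; linarith
    simp [hfa, this] at hcol
  · have hfa' : f a = -f v := hpm.resolve_left hfa
    have hfb : f b = f v := by rw [hfa'] at hab; linarith
    simp [hfa, hfb] at hcol

open Classical in
noncomputable def Phi :
    ({c : G.ConnectedComponent // (G.induce c.supp).Colorable 2} → ℝ) →ₗ[ℝ] (Fin n → ℝ) where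
  toFun t := fun v =>
    (if h : (G.induce (G.connectedComponentMk v).supp).Colorable 2 then
      t ⟨G.connectedComponentMk v, h⟩ else 0) * csgn G (G.connectedComponentMk v) v
  map_add' t s := by
    funext v
    by_cases h : (G.induce (G.connectedComponentMk v).supp).Colorable 2 <;>
      simp [h] <;> ring
  map_smul' r t := by
    funext v
    by_cases h : (G.induce (G.connectedComponentMk v).supp).Colorable 2 <;>
      simp [h] <;> ring

lemma Phi_mem (t : {c : G.ConnectedComponent // (G.induce c.supp).Colorable 2} → ℝ) :
    Phi G t ∈ KK G := by
  intro i j hij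
  have hc : G.connectedComponentMk j = G.connectedComponentMk i :=
    SimpleGraph.ConnectedComponent.sound hij.symm.reachable
  have hi : i ∈ (G.connectedComponentMk i).supp := rfl
  show (_ * _ : ℝ) + _ * _ = 0
  rw [hc, ← mul_add, csgn_adj G hij hi, mul_zero]

lemma Phi_inj : Function.Injective (Phi G) := by
  rw [injective_iff_map_eq_zero]
  intro t ht
  funext ⟨c, hb⟩
  obtain ⟨v, rfl⟩ := c.exists_rep
  have hv : v ∈ (G.connectedComponentMk v).supp := rfl
  classical
  have h2 : (if h : (G.induce (G.connectedComponentMk v).supp).Colorable 2 then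
      t ⟨G.connectedComponentMk v, h⟩ else 0) * csgn G (G.connectedComponentMk v) v = 0 :=
    congrFun ht v
  have hb' : (G.induce (G.connectedComponentMk v).supp).Colorable 2 := hb
  rw [dif_pos hb'] at h2
  show t ⟨G.connectedComponentMk v, hb'⟩ = 0
  rcases mul_eq_zero.mp h2 with h | h
  · exact h
  · exact absurd h (csgn_ne_zero G hv hb)

lemma Phi_range : LinearMap.range (Phi G) = KK G := by
  apply le_antisymm
  · rintro _ ⟨t, rfl⟩; exact Phi_mem G t
  · intro f hf
    classical
    refine ⟨fun c => f c.1.exists_rep.choose * csgn G c.1 c.1.exists_rep.choose, ?_⟩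
    funext v
    set c := G.connectedComponentMk v with hc
    have hv : v ∈ c.supp := rfl
    show (_ * _ : ℝ) = f v
    by_cases hb : (G.induce c.supp).Colorable 2
    · rw [dif_pos hb]
      set r := (⟨c, hb⟩ : {c : G.ConnectedComponent // (G.induce c.supp).Colorable 2}).1.exists_rep.choose with hr
      have hrc : G.connectedComponentMk r = c :=
        (⟨c, hb⟩ : {c : G.ConnectedComponent // (G.induce c.supp).Colorable 2}).1.exists_rep.choose_spec
      have hvc : G.connectedComponentMk v = c := (SimpleGraph.ConnectedComponent.mem_supp_iff _ _).mp hv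
      have hreach : G.Reachable r v := SimpleGraph.ConnectedComponent.exact (hrc.trans hvc.symm)
      have hw := walk_sgn G hf hb (c := c) hreach.some hrc
      -- hw : f v * csgn G c v = f r * csgn G c r
      calc f r * csgn G c r * csgn G c v = f v * csgn G c v * csgn G c v := by rw [hw]
        _ = f v * (csgn G c v * csgn G c v) := by ring
        _ = f v := by rw [csgn_sq G hv hb, mul_one]
    · rw [dif_neg hb, zero_mul]
      exact (nonbip_zero G hf hb hv).symm

lemma finrank_KK : Module.finrank ℝ (KK G) = numBipartiteComponents G := by
  classical
  have : Finite G.ConnectedComponent := Quot.finite _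
  have : Fintype {c : G.ConnectedComponent // (G.induce c.supp).Colorable 2} :=
    Fintype.ofFinite _
  have e : ({c : G.ConnectedComponent // (G.induce c.supp).Colorable 2} → ℝ) ≃ₗ[ℝ] KK G :=
    (LinearEquiv.ofInjective (Phi G) (Phi_inj G)).trans
      (LinearEquiv.ofEq _ _ (Phi_range G))
  rw [← e.finrank_eq, Module.finrank_fintype_fun_eq_card, numBipartiteComponents,
    Nat.card_eq_fintype_card]

lemma eval_edge (f : Fin n → ℝ) (i j : Fin n) :
    (Pi.basisFun ℝ (Fin n)).toDual f (Pi.single i 1 + Pi.single j 1) = f i + f j := by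
  classical
  rw [map_add,
    show (Pi.single i (1:ℝ)) = Pi.basisFun ℝ (Fin n) i from (Pi.basisFun_apply _ _ i).symm,
    show (Pi.single j (1:ℝ)) = Pi.basisFun ℝ (Fin n) j from (Pi.basisFun_apply _ _ j).symm,
    Module.Basis.toDual_apply_left, Module.Basis.toDual_apply_left, Pi.basisFun_repr, Pi.basisFun_repr]

lemma KK_eq_comap :
    KK G = Submodule.comap
      ((Pi.basisFun ℝ (Fin n)).toDualEquiv : (Fin n → ℝ) →ₗ[ℝ] Module.Dual ℝ (Fin n → ℝ))
      (Submodule.span ℝ (edgeVectors G)).dualAnnihilator := by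
  ext f
  rw [Submodule.mem_comap, Submodule.mem_dualAnnihilator]
  constructor
  · intro hf w hw
    have hle : Submodule.span ℝ (edgeVectors G) ≤
        LinearMap.ker ((Pi.basisFun ℝ (Fin n)).toDualEquiv f) := by
      rw [Submodule.span_le]
      rintro x ⟨i, j, hij, rfl⟩
      simp only [SetLike.mem_coe, LinearMap.mem_ker, Module.Basis.toDualEquiv_apply]
      rw [eval_edge]
      exact hf i j hij
    exact hle hw
  · intro hf i j hij
    have := hf (Pi.single i 1 + Pi.single j 1) (Submodule.subset_span ⟨i, j, hij, rfl⟩)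
    rw [← eval_edge f i j]
    exact this

lemma finrank_span_edgeVectors :
    Module.finrank ℝ (Submodule.span ℝ (edgeVectors G)) + Module.finrank ℝ (KK G) = n := by
  classical
  set W := Submodule.span ℝ (edgeVectors G) with hW
  have e1 : (KK G) ≃ₗ[ℝ] (Submodule.comap
      ((Pi.basisFun ℝ (Fin n)).toDualEquiv : (Fin n → ℝ) →ₗ[ℝ] Module.Dual ℝ (Fin n → ℝ))
      W.dualAnnihilator) := LinearEquiv.ofEq _ _ (KK_eq_comap G)
  have e2 : (Submodule.comap
      ((Pi.basisFun ℝ (Fin n)).toDualEquiv : (Fin n → ℝ) →ₗ[ℝ] Module.Dual ℝ (Fin n → ℝ))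
      W.dualAnnihilator) ≃ₗ[ℝ] W.dualAnnihilator :=
    LinearEquiv.ofSubmodule' (Pi.basisFun ℝ (Fin n)).toDualEquiv _
  have h1 : Module.finrank ℝ (KK G) = Module.finrank ℝ W.dualAnnihilator :=
    LinearEquiv.finrank_eq (e1.trans e2)
  have h2 : Module.finrank ℝ ((Fin n → ℝ) ⧸ W) = Module.finrank ℝ W.dualAnnihilator :=
    LinearEquiv.finrank_eq (Subspace.quotEquivAnnihilator W)
  have h3 := Submodule.finrank_quotient_add_finrank W
  have h4 : Module.finrank ℝ (Fin n → ℝ) = n := by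
    rw [Module.finrank_fintype_fun_eq_card, Fintype.card_fin]
  omega

noncomputable def sumF : (Fin n → ℝ) →ₗ[ℝ] ℝ where
  toFun f := ∑ i, f i
  map_add' := by intros; simp [Finset.sum_add_distrib]
  map_smul' := by intros; simp [Finset.mul_sum]

lemma sumF_apply (f : Fin n → ℝ) : sumF f = ∑ i, f i := rfl

lemma sumF_edge (i j : Fin n) : sumF (Pi.single i (1:ℝ) + Pi.single j 1) = 2 := by
  rw [sumF_apply]
  simp only [Pi.add_apply, Finset.sum_add_distrib, Pi.single_apply, Finset.sum_ite_eq',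
    Finset.mem_univ, if_true]
  norm_num

lemma vectorSpan_le_ker : vectorSpan ℝ (edgeVectors G) ≤ LinearMap.ker (sumF (n := n)) := by
  rw [vectorSpan, Submodule.span_le]
  rintro x hx
  rw [Set.mem_vsub] at hx
  obtain ⟨a, ha, b, hb, rfl⟩ := hx
  obtain ⟨i, j, _, rfl⟩ := ha
  obtain ⟨k, l, _, rfl⟩ := hb
  simp only [SetLike.mem_coe, LinearMap.mem_ker, vsub_eq_sub, map_sub, sumF_edge, sub_self]

lemma finrank_vectorSpan_edge {v w : Fin n} (hvw : G.Adj v w) :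
    Module.finrank ℝ (Submodule.span ℝ (edgeVectors G)) =
      Module.finrank ℝ (vectorSpan ℝ (edgeVectors G)) + 1 := by
  classical
  set x₀ : Fin n → ℝ := Pi.single v (1:ℝ) + Pi.single w 1 with hx₀
  have hx₀S : x₀ ∈ edgeVectors G := ⟨v, w, hvw, rfl⟩
  have hx₀sum : sumF x₀ = 2 := sumF_edge v w
  have hx₀ne : x₀ ≠ 0 := by
    intro h
    rw [h, map_zero] at hx₀sum
    norm_num at hx₀sum
  have hsup : Submodule.span ℝ (edgeVectors G) =
      vectorSpan ℝ (edgeVectors G) ⊔ Submodule.span ℝ {x₀} := by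
    apply le_antisymm
    · rw [Submodule.span_le]
      intro x hx
      have hmem : x - x₀ ∈ vectorSpan ℝ (edgeVectors G) := vsub_mem_vectorSpan ℝ hx hx₀S
      have : x = (x - x₀) + x₀ := by ring
      rw [this]
      exact Submodule.add_mem _ (Submodule.mem_sup_left hmem)
        (Submodule.mem_sup_right (Submodule.subset_span rfl))
    · apply sup_le
      · rw [vectorSpan, Submodule.span_le]
        rintro x hx
        rw [Set.mem_vsub] at hx
        obtain ⟨a, ha, b, hb, rfl⟩ := hx
        exact Submodule.sub_mem _ (Submodule.subset_span ha) (Submodule.subset_span hb)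
      · exact Submodule.span_mono (Set.singleton_subset_iff.mpr hx₀S)
  have hinf : vectorSpan ℝ (edgeVectors G) ⊓ Submodule.span ℝ {x₀} = ⊥ := by
    rw [eq_bot_iff]
    rintro x ⟨hx1, hx2⟩
    rw [SetLike.mem_coe, Submodule.mem_span_singleton] at hx2
    obtain ⟨a, rfl⟩ := hx2
    have h1 : sumF (a • x₀) = 0 := vectorSpan_le_ker G hx1
    rw [map_smul, hx₀sum, smul_eq_mul] at h1
    have : a = 0 := by linarith
    simp [this]
  have hcount := Submodule.finrank_sup_add_finrank_inf_eq
    (vectorSpan ℝ (edgeVectors G)) (Submodule.span ℝ {x₀})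
  rw [hinf, finrank_bot, finrank_span_singleton hx₀ne] at hcount
  rw [hsup]
  omega


end Aux

/-- For a graph `G` on `{1, …, n}` with no isolated vertices, the dimension of the
edge polytope `P(G)` equals `n - c₀(G) - 1`, where `c₀(G)` is the number of bipartite
connected components of `G`. -/
theorem dim_edgePolytope {n : ℕ} (G : SimpleGraph (Fin n))
    (hiso : ∀ v : Fin n, ∃ w : Fin n, G.Adj v w) :
    polyDim (edgePolytope G) = n - numBipartiteComponents G - 1 := by
  classical
  rw [polyDim, edgePolytope]
  have hVS : vectorSpan ℝ ((convexHull ℝ) (edgeVectors G)) = vectorSpan ℝ (edgeVectors G) := by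
    rw [← direction_affineSpan ℝ ((convexHull ℝ) (edgeVectors G)),
      ← direction_affineSpan ℝ (edgeVectors G), affineSpan_convexHull]
  rw [hVS]
  rcases Nat.eq_zero_or_pos n with hn | hn
  · subst hn
    have hle := Submodule.finrank_le (vectorSpan ℝ (edgeVectors G))
    have hz : Module.finrank ℝ (Fin 0 → ℝ) = 0 := by
      rw [Module.finrank_fintype_fun_eq_card]; simp
    omega
  · obtain ⟨w, hw⟩ := hiso ⟨0, hn⟩
    have h1 := finrank_vectorSpan_edge G hw
    have h2 := finrank_span_edgeVectors G
    have h3 := finrank_KK G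
    omega
end

section
/- Let V ⊂ ℝⁿ be the (finite) vertex set of a polytope P = conv(V), and let U ⊆ V. Then U is the vertex set of a face of P if and only if the affine hull of U is disjoint from the convex hull of V \ U. -/
open Set

/-- A face of a polytope is the intersection of the polytope with a supporting
hyperplane, together with `∅` and the polytope itself; this is captured by `IsExposed`. -/
def IsFaceOf {n : ℕ} (P F : Set (Fin n → ℝ)) : Prop :=
  IsExposed ℝ P F

/-- A continuous linear functional bounded below on an affine subspace is constant on it. -/
private lemma const_on_affineSpan {n : ℕ} (f : (Fin n → ℝ) →L[ℝ] ℝ) (v : ℝ)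
    (S : AffineSubspace ℝ (Fin n → ℝ)) (hS : ∀ x ∈ S, v < f x)
    {a b : Fin n → ℝ} (ha : a ∈ S) (hb : b ∈ S) : f a = f b := by
  by_contra h
  set t : ℝ := (v - 1 - f a) / (f b - f a) with ht
  have hm : t • (b -ᵥ a) +ᵥ a ∈ S := S.smul_vsub_vadd_mem t hb ha ha
  have hfb : f b - f a ≠ 0 := sub_ne_zero_of_ne fun e => h e.symm
  have hmul : t * (f b - f a) = v - 1 - f a := div_mul_cancel₀ _ hfb
  have hval : f (t • (b -ᵥ a) +ᵥ a) = v - 1 := by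
    simp only [vsub_eq_sub, vadd_eq_add, map_add, map_smul, map_sub, smul_eq_mul]
    linarith
  have := hS _ hm
  rw [hval] at this
  linarith

/-- If a continuous linear functional equals `c` on `U`, it equals `c` on the affine span. -/
private lemma eq_on_affineSpan {n : ℕ} (f : (Fin n → ℝ) →L[ℝ] ℝ) (c : ℝ)
    {U : Set (Fin n → ℝ)} (h : ∀ u ∈ U, f u = c) {x : Fin n → ℝ}
    (hx : x ∈ affineSpan ℝ U) : f x = c := by
  have hle : affineSpan ℝ U ≤ AffineSubspace.comap (f.toLinearMap.toAffineMap)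
      (affineSpan ℝ ({c} : Set ℝ)) := by
    rw [affineSpan_le]
    intro u hu
    show u ∈ AffineSubspace.comap _ _
    rw [AffineSubspace.mem_comap]
    simp only [LinearMap.coe_toAffineMap, ContinuousLinearMap.coe_coe,
      AffineSubspace.mem_affineSpan_singleton]
    exact h u hu
  have h2 : x ∈ AffineSubspace.comap (f.toLinearMap.toAffineMap)
      (affineSpan ℝ ({c} : Set ℝ)) := hle hx
  rw [AffineSubspace.mem_comap] at h2
  simpa only [LinearMap.coe_toAffineMap, ContinuousLinearMap.coe_coe,
    AffineSubspace.mem_affineSpan_singleton] using h2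

/-- Let `V ⊂ ℝⁿ` be the finite vertex set of the polytope `P = conv V` and let `U ⊆ V`.
Then `U` is the vertex set of a face of `P` (the vertex set of a face `F` being `F ∩ V`)
if and only if the affine hull of `U` is disjoint from the convex hull of `V \ U`. -/
theorem face_criterion {n : ℕ} (V : Set (Fin n → ℝ)) (hfin : V.Finite)
    (hvert : V = Set.extremePoints ℝ (convexHull ℝ V))
    (U : Set (Fin n → ℝ)) (hU : U ⊆ V) :
    (∃ F : Set (Fin n → ℝ), IsFaceOf (convexHull ℝ V) F ∧ F ∩ V = U) ↔
      (affineSpan ℝ U : Set (Fin n → ℝ)) ∩ convexHull ℝ (V \ U) = ∅ := by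
  constructor
  · rintro ⟨F, hF, rfl⟩
    rcases (F ∩ V).eq_empty_or_nonempty with hUe | ⟨u0, hu0⟩
    · rw [hUe]
      simp
    · obtain ⟨l, hFl⟩ := hF ⟨u0, hu0.1⟩
      have hu0F := hu0.1
      rw [hFl] at hu0F
      obtain ⟨hu0P, hmax⟩ := hu0F
      -- l is constant `l u0` on `F ∩ V`
      have hUl : ∀ u ∈ F ∩ V, l u = l u0 := by
        intro u hu
        have huF := hu.1
        rw [hFl] at huF
        exact le_antisymm (hmax u huF.1) (huF.2 u0 hu0P)
      -- l is strictly smaller on `V \ (F ∩ V)`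
      have hVlt : ∀ w ∈ V \ (F ∩ V), l w < l u0 := by
        rintro w ⟨hwV, hwU⟩
        have hwP : w ∈ convexHull ℝ V := subset_convexHull ℝ V hwV
        have hwF : w ∉ F := fun hwF => hwU ⟨hwF, hwV⟩
        rw [hFl] at hwF
        have : ¬ ∀ y ∈ convexHull ℝ V, l y ≤ l w := fun h => hwF ⟨hwP, h⟩
        push_neg at this
        obtain ⟨y, hyP, hy⟩ := this
        exact lt_of_lt_of_le hy (hmax y hyP)
      have hconv : convexHull ℝ (V \ (F ∩ V)) ⊆ {x | l x < l u0} := by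
        apply convexHull_min hVlt
        exact (convex_Iio (l u0)).linear_preimage (l : (Fin n → ℝ) →ₗ[ℝ] ℝ)
      rw [eq_empty_iff_forall_notMem]
      rintro x ⟨hx1, hx2⟩
      have h1 : l x = l u0 := eq_on_affineSpan l (l u0) hUl hx1
      have h2 : l x < l u0 := hconv hx2
      linarith
  · intro hdisj
    rcases U.eq_empty_or_nonempty with rfl | ⟨u0, hu0⟩
    · exact ⟨∅, fun h => (Set.not_nonempty_empty h).elim, by simp⟩
    rcases (V \ U).eq_empty_or_nonempty with hVU | hVU
    · have hUV : U = V := subset_antisymm hU (diff_eq_empty.mp hVU)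
      refine ⟨convexHull ℝ V, fun _ => ⟨0, ?_⟩, ?_⟩
      · ext x
        simp
      · rw [inter_eq_right.mpr (subset_convexHull ℝ V), hUV]
    · have hcomp : IsCompact (convexHull ℝ (V \ U)) :=
        (hfin.subset diff_subset).isCompact_convexHull (𝕜 := ℝ)
      have hclosed : IsClosed ((affineSpan ℝ U : Set (Fin n → ℝ))) :=
        (affineSpan ℝ U).closed_of_finiteDimensional
      have hdisj' : Disjoint (convexHull ℝ (V \ U)) (affineSpan ℝ U : Set (Fin n → ℝ)) := by
        rw [disjoint_iff_inter_eq_empty, inter_comm]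
        exact hdisj
      obtain ⟨f, a, b, hfa, hab, hfb⟩ := geometric_hahn_banach_compact_closed
        (convex_convexHull ℝ _) hcomp (affineSpan ℝ U).convex hclosed hdisj'
      have hu0S : u0 ∈ affineSpan ℝ U := subset_affineSpan ℝ U hu0
      have hconst : ∀ x ∈ affineSpan ℝ U, f x = f u0 := fun x hx =>
        const_on_affineSpan f b _ hfb hx hu0S
      have hbu0 : b < f u0 := hfb u0 hu0S
      have hVle : ∀ w ∈ V, f w ≤ f u0 := by
        intro w hw
        by_cases hwU : w ∈ U
        · exact (hconst w (subset_affineSpan ℝ U hwU)).le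
        · have := hfa w (subset_convexHull ℝ _ ⟨hw, hwU⟩)
          linarith
      have hPle : ∀ x ∈ convexHull ℝ V, f x ≤ f u0 := by
        apply convexHull_min hVle
        exact (convex_Iic (f u0)).linear_preimage (f : (Fin n → ℝ) →ₗ[ℝ] ℝ)
      refine ⟨{x ∈ convexHull ℝ V | ∀ y ∈ convexHull ℝ V, f y ≤ f x},
        fun _ => ⟨f, rfl⟩, ?_⟩
      apply subset_antisymm
      · rintro x ⟨⟨hxP, hxmax⟩, hxV⟩
        by_contra hxU
        have h1 : f x < a := hfa x (subset_convexHull ℝ _ ⟨hxV, hxU⟩)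
        have h2 : f u0 ≤ f x := hxmax u0 (subset_convexHull ℝ V (hU hu0))
        linarith
      · intro u hu
        refine ⟨⟨subset_convexHull ℝ V (hU hu), fun y hy => ?_⟩, hU hu⟩
        exact (hPle y hy).trans_eq (hconst u (subset_affineSpan ℝ U hu)).symm
end

section
/- Let k ≥ 2 and let H be a finite simple graph with at most 2k vertices. Then H contains no subgraph isomorphic to a member of F_k if and only if every cycle in H is odd and every connected component of H contains at most one cycle. Here F_k is the family of graphs on at most 2k vertices consisting of even cycles and of graphs obtained by joining two odd cycles by a path (including two odd cycles sharing exactly one vertex). -/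
open Set

/-- `H` contains an even cycle (a member of the first kind of the family `𝓕ₖ`;
note that every cycle of `H` has at most as many vertices as `H`). -/
def ContainsEvenCycle {V : Type*} (H : SimpleGraph V) : Prop :=
  ∃ (v : V) (c : H.Walk v v), c.IsCycle ∧ Even c.length

/-- `H` contains a subgraph consisting of two odd cycles joined by a path (a member of
the second kind of the family `𝓕ₖ`): two odd cycles, through `u` and `v` respectively,
meeting each other only if `u = v` (in which case they share exactly the vertex `u`),
together with a path from `u` to `v` meeting the first cycle only in `u` and the second
only in `v`.  The path may have length zero. -/
def ContainsOddDumbbell {V : Type*} (H : SimpleGraph V) : Prop :=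
  ∃ (u v : V) (c : H.Walk u u) (d : H.Walk v v) (p : H.Walk u v),
    c.IsCycle ∧ Odd c.length ∧ d.IsCycle ∧ Odd d.length ∧ p.IsPath ∧
    (∀ x : V, x ∈ c.support → x ∈ d.support → x = u ∧ x = v) ∧
    (∀ x : V, x ∈ p.support → x ∈ c.support → x = u) ∧
    (∀ x : V, x ∈ p.support → x ∈ d.support → x = v)

/-- Every cycle of `H` is odd, and every connected component of `H` contains at most
one cycle (any two cycles lying in the same component have the same edge set). -/
def CactusLike {V : Type*} (H : SimpleGraph V) : Prop :=
  (∀ (v : V) (c : H.Walk v v), c.IsCycle → Odd c.length) ∧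
  (∀ (u v : V) (c : H.Walk u u) (d : H.Walk v v), c.IsCycle → d.IsCycle →
    H.Reachable u v → ∀ e : Sym2 V, e ∈ c.edges ↔ e ∈ d.edges)


open SimpleGraph Walk List

namespace Helpers

variable {V : Type*} [DecidableEq V] {H : SimpleGraph V}

lemma length_rotate' {v x : V} (c : H.Walk v v) (hx : x ∈ c.support) :
    (c.rotate _ hx).length = c.length := by
  rw [← length_edges, ← length_edges, (c.rotate_edges _ hx).perm.length_eq]

lemma mem_rotate_edges {v x : V} (c : H.Walk v v) (hx : x ∈ c.support) {e : Sym2 V} :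
    e ∈ (c.rotate _ hx).edges ↔ e ∈ c.edges :=
  (c.rotate_edges _ hx).perm.mem_iff

lemma closed_end_mem_tail {v : V} (c : H.Walk v v) (hn : ¬ c.Nil) :
    v ∈ c.support.tail := by
  rw [← Walk.support_tail_of_not_nil c hn]; exact end_mem_support _

lemma mem_support_rotate {v x z : V} (c : H.Walk v v) (hn : ¬ c.Nil) (hx : x ∈ c.support) :
    z ∈ (c.rotate _ hx).support ↔ z ∈ c.support := by
  have hrot := (c.support_rotate _ hx).perm
  have hv : v ∈ c.support.tail := closed_end_mem_tail c hn
  have hx' : x ∈ c.support.tail := by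
    rcases (Walk.mem_support_iff _).mp hx with rfl | h
    · exact hv
    · exact h
  have hn' : ¬ (c.rotate _ hx).Nil := by
    rw [nil_iff_length_eq, length_rotate']
    exact fun h => hn (nil_iff_length_eq.mpr h)
  have hxt : x ∈ (c.rotate _ hx).support.tail := closed_end_mem_tail _ hn'
  constructor
  · intro h
    rcases (Walk.mem_support_iff _).mp h with rfl | h
    · exact hx
    · exact List.mem_of_mem_tail (hrot.mem_iff.mp h)
  · intro h
    have : z ∈ c.support.tail := by
      rcases (Walk.mem_support_iff _).mp h with rfl | h
      · exact hv
      · exact h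
    exact List.mem_of_mem_tail (hrot.mem_iff.mpr this)

lemma glue {x y : V} {P : H.Walk x y} {Q : H.Walk y x} (hP : P.IsPath) (hQ : Q.IsPath)
    (hlen : 0 < P.length)
    (hS : ∀ z, z ∈ P.support → z ∈ Q.support → z = x ∨ z = y)
    (hE : ∀ e, e ∈ P.edges → e ∉ Q.edges) : (P.append Q).IsCycle := by
  rw [Walk.isCycle_def, Walk.isTrail_def]
  refine ⟨?_, ?_, ?_⟩
  · rw [edges_append]
    exact List.Nodup.append hP.isTrail.edges_nodup hQ.isTrail.edges_nodup hE
  · intro h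
    have := congrArg Walk.length h
    rw [Walk.length_append] at this
    simp only [Walk.length_nil] at this
    omega
  · rw [support_append, P.support_eq_cons, List.cons_append, List.tail_cons]
    have hx_not : x ∉ P.support.tail := by
      have := hP.support_nodup
      rw [P.support_eq_cons] at this
      exact (List.nodup_cons.mp this).1
    have hy_not : y ∉ Q.support.tail := by
      have := hQ.support_nodup
      rw [Q.support_eq_cons] at this
      exact (List.nodup_cons.mp this).1
    refine List.Nodup.append hP.support_nodup.tail hQ.support_nodup.tail ?_
    intro z hz1 hz2
    rcases hS z (List.mem_of_mem_tail hz1) (List.mem_of_mem_tail hz2) with rfl | rfl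
    · exact hx_not hz1
    · exact hy_not hz2

end Helpers

namespace Helpers2
open Helpers
set_option linter.unusedSectionVars false

variable {V : Type*} [DecidableEq V] {H : SimpleGraph V}

lemma firstD {v' : V} (d : H.Walk v' v') : ∀ {a b : V} (W : H.Walk a b), b ∈ d.support →
    ∃ (y : V) (W1 : H.Walk a y), y ∈ d.support ∧ W1.support <+: W.support ∧
      W1.edges <+: W.edges ∧ (∀ e ∈ W1.edges, e ∉ d.edges) ∧
      (∀ z ∈ W1.support, z ∈ d.support → z = y) := by
  intro a b W
  induction W with
  | nil =>
    intro hb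
    exact ⟨_, Walk.nil, hb, List.prefix_rfl, List.prefix_rfl, by simp, by simp⟩
  | @cons a a' b h W ih =>
    intro hb
    by_cases ha : a ∈ d.support
    · exact ⟨a, Walk.nil, ha, ⟨W.support, by simp⟩, ⟨_, rfl⟩, by simp, by simp⟩
    · obtain ⟨y, W1, hy, hpre, hepre, hE1, hS1⟩ := ih hb
      refine ⟨y, Walk.cons h W1, hy, ?_, ?_, ?_, ?_⟩
      · obtain ⟨t, ht⟩ := hpre
        rw [Walk.support_cons, Walk.support_cons]
        exact ⟨t, by rw [List.cons_append, ht]⟩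
      · obtain ⟨t, ht⟩ := hepre
        rw [Walk.edges_cons, Walk.edges_cons]
        exact ⟨t, by rw [List.cons_append, ht]⟩
      · intro e he
        rw [Walk.edges_cons, List.mem_cons] at he
        rcases he with rfl | he
        · exact fun hed => ha (d.fst_mem_support_of_mem_edges hed)
        · exact hE1 e he
      · intro z hz hzd
        rw [Walk.support_cons, List.mem_cons] at hz
        rcases hz with rfl | hz
        · exact absurd hzd ha
        · exact hS1 z hz hzd

/-- The "bad path" configuration: a nontrivial path between two distinct vertices of `d`,
edge-disjoint from `d`, meeting `d` only at its endpoints. -/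
def BadPath {v' : V} (d : H.Walk v' v') : Prop :=
  ∃ (x y : V), x ≠ y ∧ x ∈ d.support ∧ y ∈ d.support ∧ ∃ P : H.Walk x y, P.IsPath ∧
    0 < P.length ∧ (∀ e ∈ P.edges, e ∉ d.edges) ∧
    (∀ z ∈ P.support, z ∈ d.support → z = x ∨ z = y)

lemma scanAux {v' : V} (d : H.Walk v' v') :
    ∀ {a w : V} (W : H.Walk a w), w ∈ d.support → W.IsPath → a ∈ d.support →
      (∃ e ∈ W.edges, e ∉ d.edges) → BadPath d := by
  intro a w W
  induction W with
  | nil => rintro _ _ _ ⟨e, he, -⟩; simp at he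
  | @cons a a' w h W ih =>
    rintro hw hp ha ⟨e, he, hed⟩
    by_cases hfe : s(a, a') ∈ d.edges
    · have ha' : a' ∈ d.support := d.snd_mem_support_of_mem_edges hfe
      rw [Walk.edges_cons, List.mem_cons] at he
      rcases he with rfl | he
      · exact absurd hfe hed
      · exact ih hw hp.of_cons ha' ⟨e, he, hed⟩
    · obtain ⟨y, W1, hy, hpre, -, hE1, hS1⟩ := firstD d W hw
      have hWp : W.IsPath := hp.of_cons
      have hsub : W1.support ⊆ W.support := hpre.sublist.subset
      have hnot : a ∉ W.support := ((Walk.cons_isPath_iff h W).mp hp).2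
      have hxy : a ≠ y := fun hh => hnot (hh ▸ hsub (end_mem_support W1))
      have hpath : (Walk.cons h W1).IsPath := by
        rw [Walk.isPath_def, Walk.support_cons, List.nodup_cons]
        exact ⟨fun hc => hnot (hsub hc), hpre.sublist.nodup hWp.support_nodup⟩
      refine ⟨a, y, hxy, ha, hy, Walk.cons h W1, hpath, by simp, ?_, ?_⟩
      · intro e' he'
        rw [Walk.edges_cons, List.mem_cons] at he'
        rcases he' with rfl | he'
        · exact hfe
        · exact hE1 e' he'
      · intro z hz hzd
        rw [Walk.support_cons, List.mem_cons] at hz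
        rcases hz with rfl | hz
        · exact Or.inl rfl
        · exact Or.inr (hS1 z hz hzd)

end Helpers2

namespace Helpers3
open Helpers Helpers2
set_option linter.unusedSectionVars false

variable {V : Type*} [DecidableEq V] {H : SimpleGraph V}

lemma topScan {v' w : V} (d : H.Walk v' v') (hw : w ∈ d.support)
    (c : H.Walk w w) (hc : c.IsCycle) (hce : ∃ e ∈ c.edges, e ∉ d.edges) :
    BadPath d ∨ ∃ g : H.Walk w w, g.IsCycle ∧ ∀ z ∈ g.support, z ∈ d.support → z = w := by
  have hnn : ¬ c.Nil := fun hn => hc.ne_nil hn.eq_nil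
  obtain ⟨w1, h, t, rfl⟩ := Walk.not_nil_iff.mp hnn
  have htp : t.IsPath := by
    rw [Walk.isPath_def]
    have := hc.support_nodup
    rwa [Walk.support_cons, List.tail_cons] at this
  obtain ⟨httr, hfnot⟩ := (Walk.isTrail_cons h t).mp hc.isTrail
  obtain ⟨e, he, hed⟩ := hce
  by_cases hfe : s(w, w1) ∈ d.edges
  · have hw1 : w1 ∈ d.support := d.snd_mem_support_of_mem_edges hfe
    rw [Walk.edges_cons, List.mem_cons] at he
    rcases he with rfl | he
    · exact absurd hfe hed
    · exact Or.inl (scanAux d t hw htp hw1 ⟨e, he, hed⟩)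
  · obtain ⟨y, W1, hy, hpre, hepre, hE1, hS1⟩ := firstD d t hw
    by_cases hyw : y = w
    · subst hyw
      right
      refine ⟨Walk.cons h W1, ?_, ?_⟩
      · rw [Walk.isCycle_def, Walk.isTrail_def, Walk.edges_cons]
        refine ⟨List.nodup_cons.mpr ⟨fun hmem => hfnot (hepre.sublist.subset hmem),
            hepre.sublist.nodup httr.edges_nodup⟩, by simp, ?_⟩
        rw [Walk.support_cons, List.tail_cons]
        exact hpre.sublist.nodup htp.support_nodup
      · intro z hz hzd
        rw [Walk.support_cons, List.mem_cons] at hz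
        rcases hz with rfl | hz
        · rfl
        · exact hS1 z hz hzd
    · left
      have hnotw : w ∉ W1.support := fun hmem => hyw (hS1 w hmem hw).symm
      have hpath : (Walk.cons h W1).IsPath := by
        rw [Walk.isPath_def, Walk.support_cons, List.nodup_cons]
        exact ⟨hnotw, hpre.sublist.nodup htp.support_nodup⟩
      refine ⟨w, y, fun hh => hyw hh.symm, hw, hy, Walk.cons h W1, hpath, by simp, ?_, ?_⟩
      · intro e' he'
        rw [Walk.edges_cons, List.mem_cons] at he'
        rcases he' with rfl | he'
        · exact hfe
        · exact hE1 e' he'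
      · intro z hz hzd
        rw [Walk.support_cons, List.mem_cons] at hz
        rcases hz with rfl | hz
        · exact Or.inl rfl
        · exact Or.inr (hS1 z hz hzd)

end Helpers3

namespace Helpers4
open Helpers Helpers2 Helpers3
set_option linter.unusedSectionVars false

variable {V : Type*} [DecidableEq V] {H : SimpleGraph V}

lemma badPath_even_cycle {v : V} (d : H.Walk v v) (hd : d.IsCycle) (hodd : Odd d.length)
    (hbad : BadPath d) : ∃ (x : V) (g : H.Walk x x), g.IsCycle ∧ Even g.length := by
  obtain ⟨x, y, hxy, hx, hy, P, hP, hPlen, hPE, hPS⟩ := hbad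
  have hdnn : ¬ d.Nil := fun hn => hd.ne_nil hn.eq_nil
  set d1 := d.rotate _ hx with hd1def
  have hd1 : d1.IsCycle := hd.rotate hx
  have hd1nn : ¬ d1.Nil := fun hn => hd1.ne_nil hn.eq_nil
  have hmemsup : ∀ z, z ∈ d1.support ↔ z ∈ d.support := fun z => mem_support_rotate d hdnn hx
  have hmemedge : ∀ e : Sym2 V, e ∈ d1.edges ↔ e ∈ d.edges := fun e => mem_rotate_edges d hx
  have hlen1 : d1.length = d.length := length_rotate' d hx
  obtain ⟨x1, h, td, htd⟩ := Walk.not_nil_iff.mp hd1nn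
  have htdp : td.IsPath := by
    rw [Walk.isPath_def]
    have := hd1.support_nodup
    rw [htd, Walk.support_cons, List.tail_cons] at this
    exact this
  have hytd : y ∈ td.support := by
    have : y ∈ d1.support := (hmemsup y).mpr hy
    rw [htd, Walk.support_cons, List.mem_cons] at this
    rcases this with rfl | hmem
    · exact absurd rfl hxy
    · exact hmem
  set T := td.takeUntil y hytd with hT
  set Dr := td.dropUntil y hytd with hDr
  have hTp : T.IsPath := htdp.takeUntil hytd
  have hDrp : Dr.IsPath := htdp.dropUntil hytd
  have hspec : T.append Dr = td := td.take_spec hytd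
  -- x is not in T.support
  have hxnotT : x ∉ T.support := by
    intro hxT
    have hnd : (T.support ++ Dr.support.tail).Nodup := by
      rw [← Walk.support_append, hspec]; exact htdp.support_nodup
    have hxDr : x ∈ Dr.support.tail :=
      Walk.end_mem_tail_support_of_ne (fun hh => hxy hh.symm) Dr
    exact (List.nodup_append.mp hnd).2.2 x hxT x hxDr rfl
  have hA1p : (Walk.cons h T).IsPath := by
    rw [Walk.isPath_def, Walk.support_cons, List.nodup_cons]
    exact ⟨hxnotT, hTp.support_nodup⟩
  -- supports of the arcs are inside d's support
  have hTd : ∀ z, z ∈ T.support → z ∈ d.support := by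
    intro z hz
    have : z ∈ td.support := td.support_takeUntil_subset hytd hz
    exact (hmemsup z).mp (by rw [htd, Walk.support_cons]; exact List.mem_cons_of_mem _ this)
  have hDrd : ∀ z, z ∈ Dr.support → z ∈ d.support := by
    intro z hz
    have : z ∈ td.support := td.support_dropUntil_subset hytd hz
    exact (hmemsup z).mp (by rw [htd, Walk.support_cons]; exact List.mem_cons_of_mem _ this)
  have hTe : ∀ e, e ∈ T.edges → e ∈ d.edges := by
    intro e he
    have : e ∈ td.edges := td.edges_takeUntil_subset hytd he
    exact (hmemedge e).mp (by rw [htd, Walk.edges_cons]; exact List.mem_cons_of_mem _ this)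
  have hDre : ∀ e, e ∈ Dr.edges → e ∈ d.edges := by
    intro e he
    have : e ∈ td.edges := td.edges_dropUntil_subset hytd he
    exact (hmemedge e).mp (by rw [htd, Walk.edges_cons]; exact List.mem_cons_of_mem _ this)
  have hfirst : s(x, x1) ∈ d.edges :=
    (hmemedge _).mp (by rw [htd, Walk.edges_cons]; exact List.mem_cons_self)
  -- the two glued cycles
  have hg1 : (P.append Dr).IsCycle := by
    refine glue hP hDrp hPlen ?_ ?_
    · intro z hz1 hz2
      exact hPS z hz1 (hDrd z hz2)
    · intro e he1 he2
      exact hPE e he1 (hDre e he2)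
  have hg2 : (P.append (Walk.cons h T).reverse).IsCycle := by
    refine glue hP hA1p.reverse hPlen ?_ ?_
    · intro z hz1 hz2
      rw [Walk.support_reverse, List.mem_reverse, Walk.support_cons, List.mem_cons] at hz2
      rcases hz2 with rfl | hz2
      · exact Or.inl rfl
      · exact hPS z hz1 (hTd z hz2)
    · intro e he1 he2
      rw [Walk.edges_reverse, List.mem_reverse, Walk.edges_cons, List.mem_cons] at he2
      rcases he2 with rfl | he2
      · exact hPE _ he1 hfirst
      · exact hPE e he1 (hTe e he2)
  -- lengths
  have hlensum : T.length + Dr.length = td.length := by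
    have := congrArg Walk.length hspec
    rwa [Walk.length_append] at this
  have hlentd : td.length + 1 = d.length := by
    have := congrArg Walk.length htd
    rw [Walk.length_cons] at this
    omega
  rcases Nat.even_or_odd (P.append Dr).length with hev | hodd1
  · exact ⟨x, P.append Dr, hg1, hev⟩
  · refine ⟨x, P.append (Walk.cons h T).reverse, hg2, ?_⟩
    rw [Walk.length_append, Walk.length_reverse, Walk.length_cons]
    rw [Walk.length_append] at hodd1
    obtain ⟨m, hm⟩ := hodd
    rw [Nat.odd_iff] at hodd1
    rw [Nat.even_iff]
    omega
end Helpers4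


open Helpers Helpers2 Helpers3 Helpers4 SimpleGraph Walk in
/-- Let `k ≥ 2` and let `H` be a graph with at most `2k` vertices.  Then `H` contains
no subgraph isomorphic to a member of the family `𝓕ₖ` (even cycles and pairs of odd
cycles joined by a path, on at most `2k` vertices — since `H` itself has at most `2k`
vertices, the size restriction is automatic) if and only if every cycle of `H` is odd
and every connected component of `H` contains at most one cycle. -/
theorem Fk_free_iff_cactusLike {V : Type*} [Fintype V] (k : ℕ) (hk : 2 ≤ k)
    (H : SimpleGraph V) (hcard : Fintype.card V ≤ 2 * k) :
    (¬ ContainsEvenCycle H ∧ ¬ ContainsOddDumbbell H) ↔ CactusLike H := by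
  classical
  constructor
  · rintro ⟨hnE, hnD⟩
    have hodd : ∀ (v : V) (c : H.Walk v v), c.IsCycle → Odd c.length := by
      intro v c hc
      rcases Nat.even_or_odd c.length with hev | ho
      · exact absurd ⟨v, c, hc, hev⟩ hnE
      · exact ho
    refine ⟨hodd, ?_⟩
    have key : ∀ (u v : V) (c : H.Walk u u) (d : H.Walk v v), c.IsCycle → d.IsCycle →
        H.Reachable u v → ∀ e ∈ c.edges, e ∈ d.edges := by
      intro u v c d hc hd hr
      by_contra hcon
      push_neg at hcon
      obtain ⟨e, hec, hed⟩ := hcon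
      by_cases hshare : ∃ w, w ∈ c.support ∧ w ∈ d.support
      · obtain ⟨w, hwc, hwd⟩ := hshare
        have hc1 : (c.rotate _ hwc).IsCycle := hc.rotate hwc
        have he1 : e ∈ (c.rotate _ hwc).edges := (mem_rotate_edges c hwc).mpr hec
        rcases topScan d hwd (c.rotate _ hwc) hc1 ⟨e, he1, hed⟩ with hbad | ⟨g, hg, hgS⟩
        · exact hnE (badPath_even_cycle d hd (hodd v d hd) hbad)
        · have hdnn : ¬ d.Nil := fun hn => hd.ne_nil hn.eq_nil
          have hd2 : (d.rotate _ hwd).IsCycle := hd.rotate hwd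
          refine hnD ⟨w, w, g, d.rotate _ hwd, Walk.nil, hg, hodd w g hg, hd2, ?_,
            Walk.IsPath.nil, ?_, ?_, ?_⟩
          · rw [length_rotate' d hwd]; exact hodd v d hd
          · intro z hzg hzd2
            have hz : z ∈ d.support := (mem_support_rotate d hdnn hwd).mp hzd2
            exact ⟨hgS z hzg hz, hgS z hzg hz⟩
          · intro z hz _
            simpa using hz
          · intro z hz _
            simpa using hz
      · push_neg at hshare
        have hcnn : ¬ c.Nil := fun hn => hc.ne_nil hn.eq_nil
        have hdnn : ¬ d.Nil := fun hn => hd.ne_nil hn.eq_nil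
        set S : Set ℕ :=
          {n | ∃ x, x ∈ c.support ∧ ∃ y, y ∈ d.support ∧ ∃ q : H.Walk x y, q.length = n}
          with hS
        obtain ⟨p0⟩ := hr
        have hne : S.Nonempty :=
          ⟨p0.length, u, c.start_mem_support, v, d.start_mem_support, p0, rfl⟩
        obtain ⟨x, hx, y, hy, q, hq⟩ := Nat.sInf_mem hne
        have hq'p : q.bypass.IsPath := q.bypass_isPath
        have hq'len : q.bypass.length = sInf S := by
          refine le_antisymm ?_ (Nat.sInf_le ⟨x, hx, y, hy, q.bypass, rfl⟩)
          calc q.bypass.length ≤ q.length := q.length_bypass_le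
          _ = sInf S := hq
        have hxonly : ∀ z ∈ q.bypass.support, z ∈ c.support → z = x := by
          intro z hz hzc
          by_contra hzx
          have hsplit : (q.bypass.takeUntil z hz).length + (q.bypass.dropUntil z hz).length
              = q.bypass.length := by
            have := congrArg Walk.length (q.bypass.take_spec hz)
            rwa [Walk.length_append] at this
          have hpos : 0 < (q.bypass.takeUntil z hz).length := by
            rcases Nat.eq_zero_or_pos (q.bypass.takeUntil z hz).length with h0 | h
            · exact absurd (Walk.eq_of_length_eq_zero h0).symm hzx
            · exact h
          have hle : sInf S ≤ (q.bypass.dropUntil z hz).length :=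
            Nat.sInf_le ⟨z, hzc, y, hy, _, rfl⟩
          omega
        have hyonly : ∀ z ∈ q.bypass.support, z ∈ d.support → z = y := by
          intro z hz hzd
          by_contra hzy
          have hsplit : (q.bypass.takeUntil z hz).length + (q.bypass.dropUntil z hz).length
              = q.bypass.length := by
            have := congrArg Walk.length (q.bypass.take_spec hz)
            rwa [Walk.length_append] at this
          have hpos : 0 < (q.bypass.dropUntil z hz).length := by
            rcases Nat.eq_zero_or_pos (q.bypass.dropUntil z hz).length with h0 | h
            · exact absurd (Walk.eq_of_length_eq_zero h0) hzy
            · exact h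
          have hle : sInf S ≤ (q.bypass.takeUntil z hz).length :=
            Nat.sInf_le ⟨x, hx, z, hzd, _, rfl⟩
          omega
        refine hnD ⟨x, y, c.rotate _ hx, d.rotate _ hy, q.bypass, hc.rotate hx, ?_,
          hd.rotate hy, ?_, hq'p, ?_, ?_, ?_⟩
        · rw [length_rotate' c hx]; exact hodd u c hc
        · rw [length_rotate' d hy]; exact hodd v d hd
        · intro z hzc hzd
          exact absurd ((mem_support_rotate d hdnn hy).mp hzd)
            (hshare z ((mem_support_rotate c hcnn hx).mp hzc))
        · intro z hz hzc
          exact hxonly z hz ((mem_support_rotate c hcnn hx).mp hzc)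
        · intro z hz hzd
          exact hyonly z hz ((mem_support_rotate d hdnn hy).mp hzd)
    intro u v c d hc hd hr e
    exact ⟨fun he => key u v c d hc hd hr e he, fun he => key v u d c hd hc hr.symm e he⟩
  · rintro ⟨hodd, huniq⟩
    constructor
    · rintro ⟨v, c, hc, hev⟩
      exact (Nat.not_odd_iff_even.mpr hev) (hodd v c hc)
    · rintro ⟨u, v, c, d, p, hc, -, hd, -, -, hcd, -, -⟩
      have hr : H.Reachable u v := ⟨p⟩
      have hiff := huniq u v c d hc hd hr
      have hnn : ¬ c.Nil := fun hn => hc.ne_nil hn.eq_nil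
      obtain ⟨u1, h, t, hce⟩ := Walk.not_nil_iff.mp hnn
      have he : s(u, u1) ∈ c.edges := by
        rw [hce, Walk.edges_cons]; exact List.mem_cons_self
      have hed : s(u, u1) ∈ d.edges := (hiff _).mp he
      have h1 : u1 ∈ c.support := c.snd_mem_support_of_mem_edges he
      have h2 : u1 ∈ d.support := d.snd_mem_support_of_mem_edges hed
      exact h.ne (hcd u1 h1 h2).1.symm
end

section
/- Let k ≥ 2 and let P and Q be two distinct paths of length k with the same pair of endpoints in a simple graph. If the union P ∪ Q (the subgraph formed by all vertices and edges of P and Q) contains no cycle of length at most k, then there exist four pairwise vertex-disjoint paths α, β, P', Q' such that P is the concatenation α P' β and Q is the concatenation α Q' β (i.e., P and Q agree on a common initial segment α and a common final segment β, and their middle segments P' and Q' are internally disjoint). -/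
open Set

open SimpleGraph Walk in
private lemma twoPaths {V : Type*} {G : SimpleGraph V} {u x : V}
    (p q : G.Walk u x) (hp : p.IsPath) (hq : q.IsPath) (hne : p ≠ q) :
    ∃ (w : V) (c : G.Walk w w), c.IsCycle ∧ c.length ≤ p.length + q.length ∧
      ∀ e ∈ c.edges, e ∈ p.edges ∨ e ∈ q.edges := by
  classical
  set H : SimpleGraph V := SimpleGraph.fromEdgeSet {e | e ∈ p.edges ∨ e ∈ q.edges} with hH
  have hmem : ∀ (r : G.Walk u x), (∀ e ∈ r.edges, e ∈ p.edges ∨ e ∈ q.edges) →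
      ∀ e ∈ r.edges, e ∈ H.edgeSet := by
    intro r hsub e he
    rw [hH, SimpleGraph.edgeSet_fromEdgeSet]
    exact ⟨hsub e he, G.not_isDiag_of_mem_edgeSet (r.edges_subset_edgeSet he)⟩
  have hpH := hmem p (fun e he => Or.inl he)
  have hqH := hmem q (fun e he => Or.inr he)
  have back : ∀ (r : G.Walk u x) (h : ∀ e ∈ r.edges, e ∈ G.edgeSet), r.transfer G h = r :=
    fun r _ => r.transfer_self
  have hne' : p.transfer H hpH ≠ q.transfer H hqH := by
    intro h
    apply hne
    have := congrArg (fun r : H.Walk u x =>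
      r.transfer G (fun e he => by
        have : e ∈ H.edgeSet := r.edges_subset_edgeSet he
        rw [hH, SimpleGraph.edgeSet_fromEdgeSet] at this
        rcases this.1 with h' | h'
        · exact p.edges_subset_edgeSet h'
        · exact q.edges_subset_edgeSet h')) h
    simp only [Walk.transfer_transfer] at this
    rwa [back, back] at this
  have hnotacyclic : ¬ H.IsAcyclic := by
    intro hac
    apply hne'
    have := SimpleGraph.isAcyclic_iff_path_unique.mp hac
      ⟨p.transfer H hpH, hp.transfer hpH⟩ ⟨q.transfer H hqH, hq.transfer hqH⟩
    exact congrArg Subtype.val this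
  simp only [SimpleGraph.IsAcyclic, not_forall, not_not] at hnotacyclic
  obtain ⟨w, c, hc⟩ := hnotacyclic
  have hce : ∀ e ∈ c.edges, e ∈ p.edges ∨ e ∈ q.edges := by
    intro e he
    have : e ∈ H.edgeSet := c.edges_subset_edgeSet he
    rw [hH, SimpleGraph.edgeSet_fromEdgeSet] at this
    exact this.1
  have hcG : ∀ e ∈ c.edges, e ∈ G.edgeSet := by
    intro e he
    rcases hce e he with h' | h'
    · exact p.edges_subset_edgeSet h'
    · exact q.edges_subset_edgeSet h'
  refine ⟨w, c.transfer G hcG, hc.transfer hcG, ?_, ?_⟩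
  · have hnodup : c.edges.Nodup := hc.isCircuit.isTrail.edges_nodup
    have hsub : c.edges ⊆ p.edges ++ q.edges := by
      intro e he
      rw [List.mem_append]
      exact hce e he
    have := (List.subperm_of_subset hnodup hsub).length_le
    simpa [Walk.length_edges] using this
  · intro e he
    rw [Walk.edges_transfer] at he
    exact hce e he

open SimpleGraph Walk in
private lemma getVert_one_append {V : Type*} {G : SimpleGraph V} {u v w : V}
    (T : G.Walk u v) (D : G.Walk v w) (h : T.length ≠ 0) :
    (T.append D).getVert 1 = T.getVert 1 := by
  rw [Walk.getVert_append]
  split_ifs with h1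
  · rfl
  · have hT : T.length = 1 := by omega
    rw [show (1 : ℕ) - T.length = 0 from by omega, Walk.getVert_zero, ← hT,
      Walk.getVert_length]

open SimpleGraph Walk in
private lemma prefixOrSuffix {V : Type*} [DecidableEq V] {G : SimpleGraph V} (k : ℕ) {u v x : V}
    (P Q : G.Walk u v) (hP : P.IsPath) (hQ : Q.IsPath)
    (hl : P.length = Q.length) (hlk : P.length ≤ k)
    (hno : ∀ (w : V) (c : G.Walk w w), c.IsCycle → c.length ≤ k →
      (∀ e ∈ c.edges, e ∈ P.edges ∨ e ∈ Q.edges) → False)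
    (hxP : x ∈ P.support) (hxQ : x ∈ Q.support) :
    P.takeUntil x hxP = Q.takeUntil x hxQ ∨ P.dropUntil x hxP = Q.dropUntil x hxQ := by
  by_contra hcon
  push_neg at hcon
  obtain ⟨h1, h2⟩ := hcon
  obtain ⟨w, c, hc, hcl, hce⟩ := twoPaths _ _ (hP.takeUntil hxP) (hQ.takeUntil hxQ) h1
  obtain ⟨w', c', hc', hcl', hce'⟩ := twoPaths _ _ (hP.dropUntil hxP) (hQ.dropUntil hxQ) h2
  have e1 : (P.takeUntil x hxP).length + (P.dropUntil x hxP).length = P.length := by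
    rw [← Walk.length_append, Walk.take_spec]
  have e2 : (Q.takeUntil x hxQ).length + (Q.dropUntil x hxQ).length = Q.length := by
    rw [← Walk.length_append, Walk.take_spec]
  by_cases hcase : (P.takeUntil x hxP).length + (Q.takeUntil x hxQ).length ≤ k
  · refine hno w c hc (hcl.trans hcase) (fun e he => ?_)
    exact (hce e he).imp (fun h => P.edges_takeUntil_subset hxP h)
      (fun h => Q.edges_takeUntil_subset hxQ h)
  · have hcase' : (P.dropUntil x hxP).length + (Q.dropUntil x hxQ).length ≤ k := by omega
    refine hno w' c' hc' (hcl'.trans hcase') (fun e he => ?_)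
    exact (hce' e he).imp (fun h => P.edges_dropUntil_subset hxP h)
      (fun h => Q.edges_dropUntil_subset hxQ h)

open SimpleGraph Walk in
private lemma stripFront {V : Type*} {G : SimpleGraph V} {v : V} :
    ∀ (L : ℕ) {u : V} (P Q : G.Walk u v), P.IsPath → Q.IsPath →
      P.length = L → Q.length = L →
      ∃ (a : V) (α : G.Walk u a) (P₁ Q₁ : G.Walk a v),
        P = α.append P₁ ∧ Q = α.append Q₁ ∧ α.IsPath ∧
        P₁.IsPath ∧ Q₁.IsPath ∧ P₁.length = Q₁.length ∧
        (P₁.length = 0 ∨ P₁.getVert 1 ≠ Q₁.getVert 1) := by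
  intro L
  induction L with
  | zero =>
    intro u P Q hP hQ hPl hQl
    exact ⟨u, Walk.nil, P, Q, (Walk.nil_append P).symm, (Walk.nil_append Q).symm,
      Walk.IsPath.nil, hP, hQ, by omega, Or.inl hPl⟩
  | succ n ih =>
    intro u P Q hP hQ hPl hQl
    cases P with
    | nil => simp at hPl
    | @cons _ w1 _ hadj P₀ =>
      cases Q with
      | nil => simp at hQl
      | @cons _ w2 _ hadj' Q₀ =>
        by_cases hw : w1 = w2
        · subst hw
          have hP₀ : P₀.IsPath := hP.of_cons
          have hQ₀ : Q₀.IsPath := hQ.of_cons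
          obtain ⟨a, α₀, P₁, Q₁, hPd, hQd, hα₀, hP₁, hQ₁, hlen, hdisj⟩ :=
            ih P₀ Q₀ hP₀ hQ₀ (by simpa using hPl) (by simpa using hQl)
          refine ⟨a, Walk.cons hadj α₀, P₁, Q₁, ?_, ?_, ?_, hP₁, hQ₁, hlen, hdisj⟩
          · rw [Walk.cons_append, ← hPd]
          · rw [Walk.cons_append, ← hQd]
          · have : ((Walk.cons hadj α₀).append P₁).IsPath := by
              rw [Walk.cons_append, ← hPd]; exact hP
            exact this.of_append_left
        · refine ⟨u, Walk.nil, Walk.cons hadj P₀, Walk.cons hadj' Q₀,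
            (Walk.nil_append _).symm, (Walk.nil_append _).symm,
            Walk.IsPath.nil, hP, hQ, by simp [hPl, hQl], Or.inr ?_⟩
          simpa using hw

open SimpleGraph Walk in
private lemma midDisjoint {V : Type*} [DecidableEq V] {G : SimpleGraph V} (k : ℕ) {a b : V}
    (P' Q' : G.Walk a b) (hP : P'.IsPath) (hQ : Q'.IsPath)
    (hl : P'.length = Q'.length) (hlk : P'.length ≤ k)
    (hno : ∀ (w : V) (c : G.Walk w w), c.IsCycle → c.length ≤ k →
      (∀ e ∈ c.edges, e ∈ P'.edges ∨ e ∈ Q'.edges) → False)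
    (h1 : P'.length = 0 ∨ P'.getVert 1 ≠ Q'.getVert 1)
    (h2 : P'.length = 0 ∨ P'.reverse.getVert 1 ≠ Q'.reverse.getVert 1) :
    ∀ x : V, x ∈ P'.support → x ∈ Q'.support → x = a ∨ x = b := by
  intro x hxP hxQ
  by_cases h0 : P'.length = 0
  · left
    obtain ⟨n, hn, hnle⟩ := Walk.mem_support_iff_exists_getVert.mp hxP
    rw [h0, Nat.le_zero] at hnle
    subst hnle
    rw [Walk.getVert_zero] at hn
    exact hn.symm
  by_contra hcon
  push_neg at hcon
  obtain ⟨hxa, hxb⟩ := hcon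
  rcases prefixOrSuffix k P' Q' hP hQ hl hlk hno hxP hxQ with heq | heq
  · have hTP : (P'.takeUntil x hxP).length ≠ 0 := fun h =>
      hxa (Walk.eq_of_length_eq_zero h).symm
    have hTQ : (Q'.takeUntil x hxQ).length ≠ 0 := fun h =>
      hxa (Walk.eq_of_length_eq_zero h).symm
    have eP := getVert_one_append (P'.takeUntil x hxP) (P'.dropUntil x hxP) hTP
    rw [Walk.take_spec] at eP
    have eQ := getVert_one_append (Q'.takeUntil x hxQ) (Q'.dropUntil x hxQ) hTQ
    rw [Walk.take_spec] at eQ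
    rcases h1 with h1 | h1
    · exact h0 h1
    · exact h1 (by rw [eP, eQ, heq])
  · have hDP : (P'.dropUntil x hxP).reverse.length ≠ 0 := by
      rw [Walk.length_reverse]
      exact fun h => hxb (Walk.eq_of_length_eq_zero h)
    have hDQ : (Q'.dropUntil x hxQ).reverse.length ≠ 0 := by
      rw [Walk.length_reverse]
      exact fun h => hxb (Walk.eq_of_length_eq_zero h)
    have eP := getVert_one_append (P'.dropUntil x hxP).reverse
      (P'.takeUntil x hxP).reverse hDP
    rw [← Walk.reverse_append, Walk.take_spec] at eP
    have eQ := getVert_one_append (Q'.dropUntil x hxQ).reverse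
      (Q'.takeUntil x hxQ).reverse hDQ
    rw [← Walk.reverse_append, Walk.take_spec] at eQ
    rcases h2 with h2 | h2
    · exact h0 h2
    · exact h2 (by rw [eP, eQ, heq])

open SimpleGraph Walk in
/-- Let `k ≥ 2` and let `P` and `Q` be two distinct paths of length `k` with the same
endpoints `u`, `v` in a simple graph `G`.  If the union `P ∪ Q` (the subgraph formed by
all vertices and edges of `P` and `Q`) contains no cycle of length at most `k`, then
`P` and `Q` agree on a common initial segment `α` and a common final segment `β`, and
their middle segments `P'` and `Q'` are internally vertex-disjoint paths. -/
theorem union_of_paths {V : Type*} (G : SimpleGraph V) (k : ℕ) (hk : 2 ≤ k)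
    (u v : V) (P Q : G.Walk u v)
    (hP : P.IsPath) (hQ : Q.IsPath)
    (hPk : P.length = k) (hQk : Q.length = k) (hne : P ≠ Q)
    (hnocycle : ¬ ∃ (w : V) (c : G.Walk w w), c.IsCycle ∧ c.length ≤ k ∧
      ∀ e ∈ c.edges, e ∈ P.edges ∨ e ∈ Q.edges) :
    ∃ (a b : V) (α : G.Walk u a) (P' Q' : G.Walk a b) (β : G.Walk b v),
      α.IsPath ∧ β.IsPath ∧ P'.IsPath ∧ Q'.IsPath ∧
      P = α.append (P'.append β) ∧ Q = α.append (Q'.append β) ∧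
      ∀ x : V, x ∈ P'.support → x ∈ Q'.support → (x = a ∨ x = b) := by
  classical
  have hnoPQ : ∀ (w : V) (c : G.Walk w w), c.IsCycle → c.length ≤ k →
      (∀ e ∈ c.edges, e ∈ P.edges ∨ e ∈ Q.edges) → False := by
    intro w c hc hcl hce
    exact hnocycle ⟨w, c, hc, hcl, hce⟩
  obtain ⟨a, α, P₁, Q₁, hPd, hQd, hα, hP₁, hQ₁, hlen₁, hdisj₁⟩ :=
    stripFront k P Q hP hQ hPk hQk
  obtain ⟨b, β', P₂, Q₂, hrPd, hrQd, hβ', hP₂, hQ₂, hlen₂, hdisj₂⟩ :=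
    stripFront P₁.reverse.length P₁.reverse Q₁.reverse
      (hP₁.reverse) (hQ₁.reverse) rfl (by simp [hlen₁])
  set P' := P₂.reverse with hP'
  set Q' := Q₂.reverse with hQ'
  set β := β'.reverse with hβ
  have hP₁d : P₁ = P'.append β := by
    have := congrArg Walk.reverse hrPd
    rwa [Walk.reverse_reverse, Walk.reverse_append] at this
  have hQ₁d : Q₁ = Q'.append β := by
    have := congrArg Walk.reverse hrQd
    rwa [Walk.reverse_reverse, Walk.reverse_append] at this
  have hPdec : P = α.append (P'.append β) := by rw [hPd, hP₁d]
  have hQdec : Q = α.append (Q'.append β) := by rw [hQd, hQ₁d]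
  have hP'path : P'.IsPath := hP₂.reverse
  have hQ'path : Q'.IsPath := hQ₂.reverse
  have hβpath : β.IsPath := hβ'.reverse
  have hlen' : P'.length = Q'.length := by
    simp only [hP', hQ', Walk.length_reverse]
    exact hlen₂
  have hlP₁ : P₁.length ≤ k := by
    have := congrArg Walk.length hPd
    rw [Walk.length_append] at this
    omega
  have hlk' : P'.length ≤ k := by
    have := congrArg Walk.length hP₁d
    rw [Walk.length_append] at this
    omega
  have hβlen : P₁.length = P'.length + β.length := by
    have := congrArg Walk.length hP₁d
    rwa [Walk.length_append] at this
  have hno' : ∀ (w : V) (c : G.Walk w w), c.IsCycle → c.length ≤ k →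
      (∀ e ∈ c.edges, e ∈ P'.edges ∨ e ∈ Q'.edges) → False := by
    intro w c hc hcl hce
    refine hnoPQ w c hc hcl (fun e he => ?_)
    rcases hce e he with h' | h'
    · left; rw [hPdec]; simp [Walk.edges_append]; tauto
    · right; rw [hQdec]; simp [Walk.edges_append]; tauto
  have cond1 : P'.length = 0 ∨ P'.getVert 1 ≠ Q'.getVert 1 := by
    by_cases h0 : P'.length = 0
    · exact Or.inl h0
    rcases hdisj₁ with h | h
    · omega
    · right
      have hQβlen : Q₁.length = Q'.length + β.length := by
        have := congrArg Walk.length hQ₁d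
        rwa [Walk.length_append] at this
      have eP := getVert_one_append P' β h0
      rw [← hP₁d] at eP
      have eQ := getVert_one_append Q' β (by omega)
      rw [← hQ₁d] at eQ
      rw [← eP, ← eQ]
      exact h
  have cond2 : P'.length = 0 ∨ P'.reverse.getVert 1 ≠ Q'.reverse.getVert 1 := by
    by_cases h0 : P'.length = 0
    · exact Or.inl h0
    rcases hdisj₂ with h | h
    · left
      rw [hP', Walk.length_reverse]
      exact h
    · right
      rw [hP', hQ', Walk.reverse_reverse, Walk.reverse_reverse]
      exact h
  exact ⟨a, b, α, P', Q', β, hα, hβpath, hP'path, hQ'path, hPdec, hQdec,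
    midDisjoint k P' Q' hP'path hQ'path hlen' hlk' hno' cond1 cond2⟩
end

section
/- Let k ≥ 2 and let G be a finite simple graph that contains no cycle of length at most k and no even cycle of length at most 2k. Then for every ordered pair of vertices u, v of G there is at most one path of length k from u to v in G. -/
open Set

open SimpleGraph

private lemma countP_toFinset {α : Type*} [DecidableEq α] {l : List α} (h : l.Nodup)
    (pr : α → Prop) [DecidablePred pr] :
    (l.toFinset.filter pr).card = l.countP (fun a => pr a) := by
  classical
  rw [List.countP_eq_length_filter, ← List.toFinset_card_of_nodup (h.filter _),
    List.toFinset_filter]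
  congr 1
  ext a
  simp

private lemma card_symmDiff_eq {α : Type*} [DecidableEq α] (s t : Finset α) :
    (symmDiff s t).card + 2 * (s ∩ t).card = s.card + t.card := by
  have h1 : symmDiff s t = (s ∪ t) \ (s ∩ t) := by
    rw [symmDiff_eq_sup_sdiff_inf]; rfl
  have h2 : (s ∩ t) ⊆ (s ∪ t) := (Finset.inter_subset_left).trans Finset.subset_union_left
  have h3 := Finset.card_sdiff_of_subset h2
  have h4 := Finset.card_union_add_card_inter s t
  have h5 := Finset.card_le_card h2
  rw [h1, h3]
  omega

private lemma aux_path_eq {V : Type*} [DecidableEq V] {G : SimpleGraph V} {u v : V}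
    (p : G.Walk u v) : ∀ (q : G.Walk u v), p.IsPath → q.IsPath →
      p.edges.toFinset = q.edges.toFinset → p = q := by
  induction p with
  | nil =>
    intro q _ hq _
    exact ((Walk.isPath_iff_eq_nil (p := q)).mp hq).symm
  | @cons u w v h p ih =>
    intro q hp hq he
    cases q with
    | nil => exact absurd (Walk.isPath_iff_eq_nil.mp hp) (by simp)
    | @cons _ w' _ h' q' =>
      rw [Walk.cons_isPath_iff] at hp hq
      have hmem : s(u, w) ∈ (Walk.cons h' q').edges := by
        rw [← List.mem_toFinset, ← he]
        simp
      rw [Walk.edges_cons, List.mem_cons] at hmem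
      have hww : w = w' := by
        rcases hmem with h1 | h1
        · exact Sym2.congr_right.mp h1
        · exact absurd (Walk.fst_mem_support_of_mem_edges q' h1) hq.2
      subst hww
      have h1 : s(u, w) ∉ p.edges :=
        fun hm => hp.2 (Walk.fst_mem_support_of_mem_edges p hm)
      have h2 : s(u, w) ∉ q'.edges :=
        fun hm => hq.2 (Walk.fst_mem_support_of_mem_edges q' hm)
      have key : p.edges.toFinset = q'.edges.toFinset := by
        have he' : insert s(u, w) p.edges.toFinset = insert s(u, w) q'.edges.toFinset := by
          simpa using he
        have he2 : (insert s(u, w) p.edges.toFinset).erase s(u, w)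
            = (insert s(u, w) q'.edges.toFinset).erase s(u, w) := by rw [he']
        rwa [Finset.erase_insert (by simpa using h1),
          Finset.erase_insert (by simpa using h2)] at he2
      rw [ih q' hp.1 hq.1 key]

private lemma aux_exists_cycle {V : Type*} [DecidableEq V] {H : SimpleGraph V}
    (S : Finset (Sym2 V)) (hS : H.edgeSet ⊆ ↑S) {a b : V} (hab : H.Adj a b)
    (hmin : ∀ x y : V, H.Adj x y → ∃ z, z ≠ y ∧ H.Adj x z) :
    ∃ (w : V) (c : H.Walk w w), c.IsCycle := by
  by_contra hnc
  push_neg at hnc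
  have hbound : ∀ {x y : V} (p : H.Walk x y), p.IsPath → p.length ≤ S.card := by
    intro x y p hp
    have hnd : p.edges.Nodup := hp.isTrail.edges_nodup
    have hsub : p.edges.toFinset ⊆ S := by
      intro e he
      exact hS (p.edges_subset_edgeSet (List.mem_toFinset.mp he))
    calc p.length = p.edges.length := (p.length_edges).symm
    _ = p.edges.toFinset.card := (List.toFinset_card_of_nodup hnd).symm
    _ ≤ S.card := Finset.card_le_card hsub
  have key : ∀ n : ℕ, ∃ (x y : V) (p : H.Walk x y), p.IsPath ∧ p.length = n + 1 := by
    intro n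
    induction n with
    | zero => exact ⟨a, b, Walk.cons hab Walk.nil, by simp [hab.ne], by simp⟩
    | succ n ih =>
      obtain ⟨x, y, p, hp, hl⟩ := ih
      have hxy : y ≠ x := by
        rintro rfl
        rw [(Walk.isPath_iff_eq_nil (p := p)).mp hp] at hl
        simp at hl
      obtain ⟨c0, hyc, r', hr⟩ := Walk.exists_eq_cons_of_ne hxy p.reverse
      have hrp : p.reverse.IsPath := hp.reverse
      obtain ⟨z, hzc, hyz⟩ := hmin y c0 hyc
      by_cases hz : z ∈ p.reverse.support
      · exfalso
        have ht : (p.reverse.takeUntil z hz).IsPath := hrp.takeUntil hz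
        have hedge : s(z, y) ∉ (p.reverse.takeUntil z hz).edges := by
          intro hmem
          have hmem' : s(z, y) ∈ p.reverse.edges := Walk.edges_takeUntil_subset _ hz hmem
          rw [hr, Walk.edges_cons, List.mem_cons] at hmem'
          rcases hmem' with h1 | h1
          · rw [Sym2.eq_iff] at h1
            rcases h1 with ⟨h2, -⟩ | ⟨h2, -⟩
            · exact hyz.ne h2.symm
            · exact hzc h2
          · have hy : y ∈ r'.support :=
              Walk.fst_mem_support_of_mem_edges r' (by rwa [Sym2.eq_swap] at h1)
            rw [hr, Walk.cons_isPath_iff] at hrp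
            exact hrp.2 hy
        have hc : (Walk.cons hyz.symm (p.reverse.takeUntil z hz)).IsCycle :=
          (Walk.cons_isCycle_iff _ _).mpr ⟨ht, hedge⟩
        exact hnc z _ hc
      · refine ⟨z, x, Walk.cons hyz.symm p.reverse, ?_, ?_⟩
        · rw [Walk.cons_isPath_iff]
          exact ⟨hrp, hz⟩
        · rw [Walk.length_cons, Walk.length_reverse, hl]
  obtain ⟨x, y, p, hp, hl⟩ := key S.card
  have := hbound p hp
  omega

private lemma aux_cycle_of_finset {V : Type*} [DecidableEq V] {G : SimpleGraph V}
    (D : Finset (Sym2 V)) (hne : D.Nonempty)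
    (hDG : (↑D : Set (Sym2 V)) ⊆ G.edgeSet)
    (hpar : ∀ x : V, Even ((D.filter (fun e => x ∈ e)).card)) :
    ∃ (w : V) (c : G.Walk w w), c.IsCycle ∧ c.edges.toFinset ⊆ D := by
  classical
  set H := SimpleGraph.fromEdgeSet (↑D : Set (Sym2 V)) with hH
  have hadj : ∀ a b : V, s(a, b) ∈ D → H.Adj a b := by
    intro a b h
    rw [hH, SimpleGraph.fromEdgeSet_adj]
    exact ⟨h, (G.mem_edgeSet.mp (hDG h)).ne⟩
  have hadj' : ∀ a b : V, H.Adj a b → s(a, b) ∈ D := by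
    intro a b h
    rw [hH, SimpleGraph.fromEdgeSet_adj] at h
    exact h.1
  have hedge : H.edgeSet ⊆ (↑D : Set (Sym2 V)) := by
    rw [hH, SimpleGraph.edgeSet_fromEdgeSet]
    exact Set.diff_subset
  have hmin : ∀ x y : V, H.Adj x y → ∃ z, z ≠ y ∧ H.Adj x z := by
    intro x y hxy
    have hx : s(x, y) ∈ D.filter (fun e => x ∈ e) :=
      Finset.mem_filter.mpr ⟨hadj' x y hxy, Sym2.mem_mk_left x y⟩
    have h2 : 1 < (D.filter (fun e => x ∈ e)).card := by
      have h0 : 0 < (D.filter (fun e => x ∈ e)).card := Finset.card_pos.mpr ⟨_, hx⟩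
      obtain ⟨m, hm⟩ := hpar x
      omega
    obtain ⟨e, he, hne'⟩ := Finset.exists_mem_ne h2 s(x, y)
    have hxe : x ∈ e := (Finset.mem_filter.mp he).2
    obtain ⟨z, rfl⟩ := Sym2.mem_iff_exists.mp hxe
    exact ⟨z, fun h => hne' (by rw [h]), hadj x z (Finset.mem_filter.mp he).1⟩
  obtain ⟨e, he⟩ := hne
  have hab : ∃ a b : V, H.Adj a b := by
    induction e using Sym2.ind with
    | _ a b => exact ⟨a, b, hadj a b he⟩
  obtain ⟨a, b, hab⟩ := hab
  obtain ⟨w, c, hc⟩ := aux_exists_cycle D hedge hab hmin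
  have htrans : ∀ e ∈ c.edges, e ∈ G.edgeSet := fun e he' =>
    hDG (hedge (c.edges_subset_edgeSet he'))
  refine ⟨w, c.transfer G htrans, hc.transfer htrans, ?_⟩
  intro e he'
  rw [List.mem_toFinset, Walk.edges_transfer] at he'
  exact hedge (c.edges_subset_edgeSet he')

/-- Let `k ≥ 2` and let `G` be a graph containing no cycle of length at most `k` and no
even cycle of length at most `2k`.  Then for every pair of vertices `u`, `v` there is
at most one path of length `k` from `u` to `v` in `G`. -/
theorem unique_path_of_length_k {V : Type*} (G : SimpleGraph V) (k : ℕ) (hk : 2 ≤ k)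
    (hshort : ¬ ∃ (v : V) (c : G.Walk v v), c.IsCycle ∧ c.length ≤ k)
    (heven : ¬ ∃ (v : V) (c : G.Walk v v), c.IsCycle ∧ Even c.length ∧
      c.length ≤ 2 * k) :
    ∀ (u v : V) (p q : G.Walk u v), p.IsPath → q.IsPath →
      p.length = k → q.length = k → p = q := by
  classical
  intro u v p q hp hq hpl hql
  by_contra hpq
  have huv : u ≠ v := by
    rintro rfl
    rw [(Walk.isPath_iff_eq_nil (p := p)).mp hp] at hpl
    simp only [Walk.length_nil] at hpl
    omega
  set A := p.edges.toFinset with hA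
  set B := q.edges.toFinset with hB
  have hAcard : A.card = k := by
    rw [hA, List.toFinset_card_of_nodup hp.isTrail.edges_nodup, Walk.length_edges, hpl]
  have hBcard : B.card = k := by
    rw [hB, List.toFinset_card_of_nodup hq.isTrail.edges_nodup, Walk.length_edges, hql]
  set D := symmDiff A B with hD
  have hDne : D.Nonempty := by
    rw [Finset.nonempty_iff_ne_empty]
    intro h
    have hAB : A = B := by
      have h' : symmDiff A B = ⊥ := by rw [← hD, Finset.bot_eq_empty]; exact h
      exact symmDiff_eq_bot.mp h' 
    exact hpq (aux_path_eq p q hp hq hAB)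
  have hDsub : D ⊆ A ∪ B := by
    intro e he
    rw [hD, Finset.mem_symmDiff] at he
    rcases he with ⟨h1, -⟩ | ⟨h1, -⟩ <;> simp [Finset.mem_union, h1]
  have hmemD : ∀ e ∈ D, e ∈ G.edgeSet := by
    intro e he
    rcases Finset.mem_union.mp (hDsub he) with h1 | h1
    · exact p.edges_subset_edgeSet (by rwa [hA, List.mem_toFinset] at h1)
    · exact q.edges_subset_edgeSet (by rwa [hB, List.mem_toFinset] at h1)
  have hDG : (↑D : Set (Sym2 V)) ⊆ G.edgeSet := fun e he => hmemD e he
  have even_symmDiff : ∀ (s t : Finset (Sym2 V)), (Even s.card ↔ Even t.card) →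
      Even ((symmDiff s t).card) := by
    intro s t h
    have hcard := card_symmDiff_eq s t
    rw [Nat.even_iff, Nat.even_iff] at h
    rw [Nat.even_iff]
    omega
  have hparA : ∀ x : V, (Even ((A.filter (fun e => x ∈ e)).card) ↔ (x ≠ u ∧ x ≠ v)) := by
    intro x
    rw [hA, countP_toFinset hp.isTrail.edges_nodup]
    rw [hp.isTrail.even_countP_edges_iff x]
    exact ⟨fun h => h huv, fun h _ => h⟩
  have hparB : ∀ x : V, (Even ((B.filter (fun e => x ∈ e)).card) ↔ (x ≠ u ∧ x ≠ v)) := by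
    intro x
    rw [hB, countP_toFinset hq.isTrail.edges_nodup]
    rw [hq.isTrail.even_countP_edges_iff x]
    exact ⟨fun h => h huv, fun h _ => h⟩
  have filter_symmDiff : ∀ (s t : Finset (Sym2 V)) (x : V),
      (symmDiff s t).filter (fun e => x ∈ e)
        = symmDiff (s.filter (fun e => x ∈ e)) (t.filter (fun e => x ∈ e)) := by
    intro s t x
    ext e
    simp only [Finset.mem_filter, Finset.mem_symmDiff]
    tauto
  have hparD : ∀ x : V, Even ((D.filter (fun e => x ∈ e)).card) := by
    intro x
    rw [hD, filter_symmDiff]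
    exact even_symmDiff _ _ (by rw [hparA x, hparB x])
  have hDcardEven : Even D.card := by
    rw [hD]
    exact even_symmDiff _ _ (by rw [hAcard, hBcard])
  have hDcard : D.card ≤ 2 * k := by
    have h1 := Finset.card_le_card hDsub
    have h2 := Finset.card_union_le A B
    omega
  obtain ⟨w, c, hc, hcsub⟩ := aux_cycle_of_finset D hDne hDG hparD
  have hnodup : c.edges.Nodup := hc.isTrail.edges_nodup
  have hlcard : c.edges.toFinset.card = c.length := by
    rw [List.toFinset_card_of_nodup hnodup, Walk.length_edges]
  have hlle : c.length ≤ D.card := by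
    rw [← hlcard]
    exact Finset.card_le_card hcsub
  have hlgt : k < c.length := by
    by_contra h
    push_neg at h
    exact hshort ⟨w, c, hc, h⟩
  have hlodd : ¬ Even c.length := by
    intro h
    exact heven ⟨w, c, hc, h, by omega⟩
  set C := c.edges.toFinset with hC
  set D' := D \ C with hD'
  have hD'card : D'.card = D.card - c.length := by
    rw [hD', Finset.card_sdiff_of_subset hcsub, hlcard]
  have hD'ne : D'.Nonempty := by
    rw [← Finset.card_pos, hD'card]
    rw [Nat.even_iff] at hDcardEven
    rw [Nat.even_iff] at hlodd
    omega
  have hD'G : (↑D' : Set (Sym2 V)) ⊆ G.edgeSet := fun e he =>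
    hmemD e (Finset.sdiff_subset (by exact_mod_cast he))
  have hparD' : ∀ x : V, Even ((D'.filter (fun e => x ∈ e)).card) := by
    intro x
    have hfe : D'.filter (fun e => x ∈ e)
        = (D.filter (fun e => x ∈ e)) \ (C.filter (fun e => x ∈ e)) := by
      rw [hD']
      ext e
      simp only [Finset.mem_filter, Finset.mem_sdiff]
      tauto
    have hsub2 : C.filter (fun e => x ∈ e) ⊆ D.filter (fun e => x ∈ e) :=
      Finset.filter_subset_filter _ hcsub
    have hcardeq : (D'.filter (fun e => x ∈ e)).card
        = (D.filter (fun e => x ∈ e)).card - (C.filter (fun e => x ∈ e)).card := by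
      rw [hfe, Finset.card_sdiff_of_subset hsub2]
    have hevenC : Even ((C.filter (fun e => x ∈ e)).card) := by
      rw [hC, countP_toFinset hnodup]
      exact (hc.isTrail.even_countP_edges_iff x).mpr (fun h => absurd rfl h)
    have hevenD := hparD x
    have hle := Finset.card_le_card hsub2
    rw [Nat.even_iff] at hevenC hevenD ⊢
    omega
  obtain ⟨w2, c2, hc2, hc2sub⟩ := aux_cycle_of_finset D' hD'ne hD'G hparD'
  apply hshort
  refine ⟨w2, c2, hc2, ?_⟩
  have hl2 : c2.edges.toFinset.card = c2.length := by
    rw [List.toFinset_card_of_nodup hc2.isTrail.edges_nodup, Walk.length_edges]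
  have h2 := Finset.card_le_card hc2sub
  omega
end
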